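/- Let B be a structure on the two-element domain {0,1} with canonical relation R_B (the product of all its relations), and suppose 0 is a ∀-canon and 1 is an ∃-canon, i.e., for every partition I|J of the coordinates of R_B and every instantiation of J, R_B with I set to 0 implies R_B with I set to 1. Then for every prenex sentence φ of positive equality-free first-order logic, B ⊨ φ if and only if B ⊨ φ[∀/0, ∃/1], where φ[∀/0, ∃/1] is the quantifier-free sentence obtained from φ by instantiating every universally quantified variable as 0 and every existentially quantified variable as 1. -/
import Mathlib


/-- Quantifier-free positive equality-free formulas over a relational signature
with `m` relation symbols of arities `ar`, with `n` free variables. -/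
inductive BQF (m : ℕ) (ar : Fin m → ℕ) : ℕ → Type
  | atom {n : ℕ} (i : Fin m) (v : Fin (ar i) → Fin n) : BQF m ar n
  | conj {n : ℕ} (φ ψ : BQF m ar n) : BQF m ar n
  | disj {n : ℕ} (φ ψ : BQF m ar n) : BQF m ar n

/-- Prenex positive equality-free first-order formulas over the signature. -/
inductive BPFO (m : ℕ) (ar : Fin m → ℕ) : ℕ → Type
  | qf  {n : ℕ} (φ : BQF m ar n) : BPFO m ar n
  | ex  {n : ℕ} (φ : BPFO m ar (n + 1)) : BPFO m ar n
  | all {n : ℕ} (φ : BPFO m ar (n + 1)) : BPFO m ar n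

def BQF.eval {m : ℕ} {ar : Fin m → ℕ} {V : Type*} (R : ∀ i, (Fin (ar i) → V) → Prop) :
    {n : ℕ} → BQF m ar n → (Fin n → V) → Prop
  | _, .atom i v, ρ => R i (fun k => ρ (v k))
  | _, .conj φ ψ, ρ => φ.eval R ρ ∧ ψ.eval R ρ
  | _, .disj φ ψ, ρ => φ.eval R ρ ∨ ψ.eval R ρ

/-- Evaluation; `u = some x` (resp. `e = some y`) instantiates every universal
(resp. existential) variable as `x` (resp. `y`); `none` means genuine quantification. -/
def BPFO.eval {m : ℕ} {ar : Fin m → ℕ} {V : Type*} (R : ∀ i, (Fin (ar i) → V) → Prop)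
    (u e : Option V) : {n : ℕ} → BPFO m ar n → (Fin n → V) → Prop
  | _, .qf φ, ρ => φ.eval R ρ
  | _, .ex φ, ρ =>
      match e with
      | none => ∃ v, φ.eval R u e (Fin.snoc ρ v)
      | some y => φ.eval R u e (Fin.snoc ρ y)
  | _, .all φ, ρ =>
      match u with
      | none => ∀ v, φ.eval R u e (Fin.snoc ρ v)
      | some x => φ.eval R u e (Fin.snoc ρ x)

def BPFO.Sat {m : ℕ} {ar : Fin m → ℕ} {V : Type*} (R : ∀ i, (Fin (ar i) → V) → Prop)
    (u e : Option V) (φ : BPFO m ar 0) : Prop :=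
  φ.eval R u e (fun i => i.elim0)

/-- The canonical relation `R_B`: the product of all relations of `B`, a relation
on tuples indexed by the disjoint union of the coordinate positions. -/
def canonRel {m : ℕ} {ar : Fin m → ℕ} {V : Type*} (R : ∀ i, (Fin (ar i) → V) → Prop)
    (t : (Σ i : Fin m, Fin (ar i)) → V) : Prop :=
  ∀ i, R i (fun k => t ⟨i, k⟩)

theorem snoc_le_snoc {n : ℕ} {ρ ρ' : Fin n → Bool} {v v' : Bool}
    (h : ∀ j, ρ j ≤ ρ' j) (hv : v ≤ v') :
    ∀ j, (Fin.snoc ρ v : Fin (n + 1) → Bool) j ≤ (Fin.snoc ρ' v' : Fin (n + 1) → Bool) j := by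
  intro j
  refine Fin.lastCases (motive := fun j =>
    (Fin.snoc ρ v : Fin (n + 1) → Bool) j ≤ (Fin.snoc ρ' v' : Fin (n + 1) → Bool) j) ?_ ?_ j
  · simpa using hv
  · intro j; simpa using h j

theorem bqf_mono {m : ℕ} {ar : Fin m → ℕ} {R : ∀ i, (Fin (ar i) → Bool) → Prop}
    (hR : ∀ i a a', (∀ k, a k ≤ a' k) → R i a → R i a') :
    ∀ {n : ℕ} (φ : BQF m ar n) (ρ ρ' : Fin n → Bool), (∀ j, ρ j ≤ ρ' j) →
      φ.eval R ρ → φ.eval R ρ' := by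
  intro n φ
  induction φ with
  | atom i v =>
      intro ρ ρ' h hv
      simp only [BQF.eval] at hv ⊢
      exact hR i _ _ (fun k => h (v k)) hv
  | conj φ ψ ihφ ihψ =>
      intro ρ ρ' h hv
      simp only [BQF.eval] at hv ⊢
      exact ⟨ihφ ρ ρ' h hv.1, ihψ ρ ρ' h hv.2⟩
  | disj φ ψ ihφ ihψ =>
      intro ρ ρ' h hv
      simp only [BQF.eval] at hv ⊢
      exact hv.imp (ihφ ρ ρ' h) (ihψ ρ ρ' h)

theorem bpfo_mono {m : ℕ} {ar : Fin m → ℕ} {R : ∀ i, (Fin (ar i) → Bool) → Prop}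
    (hR : ∀ i a a', (∀ k, a k ≤ a' k) → R i a → R i a') (u e : Option Bool) :
    ∀ {n : ℕ} (φ : BPFO m ar n) (ρ ρ' : Fin n → Bool), (∀ j, ρ j ≤ ρ' j) →
      φ.eval R u e ρ → φ.eval R u e ρ'
  | _, .qf φ, ρ, ρ', h, hv => bqf_mono hR φ ρ ρ' h hv
  | _, .ex φ, ρ, ρ', h, hv => by
      cases e with
      | none =>
          obtain ⟨v, hv⟩ := hv
          exact ⟨v, bpfo_mono hR u none φ _ _ (snoc_le_snoc h le_rfl) hv⟩
      | some y => exact bpfo_mono hR u (some y) φ _ _ (snoc_le_snoc h le_rfl) hv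
  | _, .all φ, ρ, ρ', h, hv => by
      cases u with
      | none => exact fun v => bpfo_mono hR none e φ _ _ (snoc_le_snoc h le_rfl) (hv v)
      | some x => exact bpfo_mono hR (some x) e φ _ _ (snoc_le_snoc h le_rfl) hv

theorem bpfo_main {m : ℕ} {ar : Fin m → ℕ} {R : ∀ i, (Fin (ar i) → Bool) → Prop}
    (hR : ∀ i a a', (∀ k, a k ≤ a' k) → R i a → R i a') :
    ∀ {n : ℕ} (φ : BPFO m ar n) (ρ : Fin n → Bool),
      φ.eval R none none ρ ↔ φ.eval R (some false) (some true) ρ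
  | _, .qf φ, ρ => Iff.rfl
  | _, .ex φ, ρ => by
      constructor
      · rintro ⟨v, hv⟩
        exact bpfo_mono hR _ _ φ _ _ (snoc_le_snoc (fun j => le_rfl) (by simp))
          ((bpfo_main hR φ _).1 hv)
      · intro hv
        exact ⟨true, (bpfo_main hR φ _).2 hv⟩
  | _, .all φ, ρ => by
      constructor
      · intro hv
        exact (bpfo_main hR φ _).1 (hv false)
      · intro hv v
        exact bpfo_mono hR _ _ φ _ _ (snoc_le_snoc (fun j => le_rfl) (by simp))
          ((bpfo_main hR φ _).2 hv)

/-- let `B` be a boolean structure (domain `Bool`, with `false = 0`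
and `true = 1`) with no empty relations, and suppose `0` is a ∀-canon and `1` an
∃-canon: for every partition of the coordinates of the canonical relation `R_B`
(given by `p`) and every instantiation `t` of the remaining coordinates, `R_B`
with the `p`-coordinates set to `0` implies `R_B` with them set to `1`.  Then a
prenex positive equality-free sentence `φ` holds in `B` iff the quantifier-free
sentence `φ[∀/0, ∃/1]` holds in `B`. -/
theorem stmt0 {m : ℕ} {ar : Fin m → ℕ} (R : ∀ i, (Fin (ar i) → Bool) → Prop)
    (hne : ∀ i, ∃ t, R i t)
    (hcanon : ∀ (t p : (Σ i : Fin m, Fin (ar i)) → Bool),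
      canonRel R (fun c => if p c then false else t c) →
        canonRel R (fun c => if p c then true else t c)) :
    ∀ φ : BPFO m ar 0,
      BPFO.Sat R none none φ ↔ BPFO.Sat R (some false) (some true) φ := by
  have hR : ∀ i a a', (∀ k, a k ≤ a' k) → R i a → R i a' := by
    intro i a a' hle ha
    set t : (Σ j : Fin m, Fin (ar j)) → Bool :=
      fun c => if h : c.1 = i then a (Fin.cast (congrArg ar h) c.2)
               else (hne c.1).choose c.2 with ht
    set p : (Σ j : Fin m, Fin (ar j)) → Bool :=
      fun c => if h : c.1 = i then
                 (!a (Fin.cast (congrArg ar h) c.2)) && a' (Fin.cast (congrArg ar h) c.2)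
               else false with hp
    have h0 : canonRel R (fun c => if p c then false else t c) := by
      intro j
      by_cases hj : j = i
      · subst hj
        have : (fun k => if p ⟨j, k⟩ then false else t ⟨j, k⟩) = a := by
          funext k
          simp only [hp, ht, dif_pos rfl, Fin.cast_refl]
          cases hak : a k <;> simp [hak]
        rw [this]; exact ha
      · have : (fun k => if p ⟨j, k⟩ then false else t ⟨j, k⟩) = (hne j).choose := by
          funext k
          simp only [hp, ht, dif_neg hj]
          simp
        rw [this]; exact (hne j).choose_spec
    have h1 := hcanon t p h0
    have := h1 i
    have heq : (fun k => if p ⟨i, k⟩ then true else t ⟨i, k⟩) = a' := by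
      funext k
      simp only [hp, ht, dif_pos rfl, Fin.cast_refl]
      have hk := hle k
      cases hak : a k <;> cases hak' : a' k <;> simp only [Bool.le_iff_imp] at hk <;> simp_all
    rwa [heq] at this
  intro φ
  exact bpfo_main hR φ _
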